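/- Let Z = {z_1, ..., z_N} be a finite nonempty set of points in a real inner product space (e.g. ℝ^r), let a be a reference point such that d_Z(a) = dist(a, conv(Z)) > 0, let D_Z = diam(Z), and assume D_Z ≤ 2·d_Z(a). Define the angular diameter of a finite set W with respect to a as α_W(a) = max over pairs w_i, w_j ∈ W of the angle ∠(w_i − a, w_j − a). Then for every barycentric point v ∈ conv(Z) with v ≠ a, the angular diameter of the enlarged cloud satisfies α_{Z ∪ {v}}(a) ≤ max{ α_Z(a), 2·arcsin(D_Z / (2·d_Z(a))) }. -/
import Mathlib


open Metric InnerProductGeometry RealInnerProductSpace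

/-- The angular diameter of a set `W` with respect to a reference point `a`:
the supremum of the angles `∠(u − a, w − a)` over pairs `u, w ∈ W`. -/
noncomputable def angularDiam {E : Type*} [NormedAddCommGroup E]
    [InnerProductSpace ℝ E] (a : E) (W : Set E) : ℝ :=
  sSup {θ : ℝ | ∃ u ∈ W, ∃ w ∈ W, θ = angle (u - a) (w - a)}

/-- Key geometric estimate: if `u, w` are at distance at least `d > 0` from `a`
and `‖u - w‖ ≤ D`, then the angle at `a` is at most `2 arcsin (D / (2d))`. -/
lemma angle_le_two_arcsin {E : Type*} [NormedAddCommGroup E]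
    [InnerProductSpace ℝ E] {a u w : E} {d D : ℝ} (hd : 0 < d)
    (hu : d ≤ ‖u - a‖) (hw : d ≤ ‖w - a‖) (huw : ‖u - w‖ ≤ D) :
    angle (u - a) (w - a) ≤ 2 * Real.arcsin (D / (2 * d)) := by
  set x := u - a with hxdef
  set y := w - a with hydef
  set θ := angle x y with hθdef
  have hθ0 : 0 ≤ θ := angle_nonneg x y
  have hθπ : θ ≤ Real.pi := angle_le_pi x y
  have hx : d ≤ ‖x‖ := hu
  have hy : d ≤ ‖y‖ := hw
  have hxy : x - y = u - w := by simp [hxdef, hydef]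
  have hinner : Real.cos θ * (‖x‖ * ‖y‖) = ⟪x, y⟫ :=
    cos_angle_mul_norm_mul_norm x y
  have hlaw : ‖x - y‖ ^ 2 = ‖x‖ ^ 2 - 2 * ⟪x, y⟫ + ‖y‖ ^ 2 :=
    norm_sub_sq_real x y
  have hsinsq : Real.sin (θ / 2) ^ 2 = 1 / 2 - Real.cos θ / 2 := by
    have := Real.sin_sq_eq_half_sub (θ / 2)
    rwa [show 2 * (θ / 2) = θ by ring] at this
  have hsin0 : 0 ≤ Real.sin (θ / 2) := by
    apply Real.sin_nonneg_of_nonneg_of_le_pi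
    · linarith
    · linarith [Real.pi_pos]
  have hcos1 : Real.cos θ ≤ 1 := Real.cos_le_one θ
  have hxw : ‖x - y‖ ≤ D := by rw [hxy]; exact huw
  have hxw0 : 0 ≤ ‖x - y‖ := norm_nonneg _
  have hD0 : 0 ≤ D := le_trans hxw0 hxw
  -- 2 d sin(θ/2) ≤ ‖x - y‖ ≤ D
  have hkey : 2 * d * Real.sin (θ / 2) ≤ D := by
    have hsq : (2 * d * Real.sin (θ / 2)) ^ 2 ≤ ‖x - y‖ ^ 2 := by
      have h1 : d * d ≤ ‖x‖ * ‖y‖ :=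
        mul_le_mul hx hy hd.le (norm_nonneg _)
      nlinarith [sq_nonneg (‖x‖ - ‖y‖), hsinsq, hlaw, hinner, hcos1, hsin0]
    have h2 : 0 ≤ 2 * d * Real.sin (θ / 2) := by positivity
    nlinarith
  have hratio : Real.sin (θ / 2) ≤ D / (2 * d) := by
    rw [le_div_iff₀ (by positivity)]
    linarith [hkey]
  have harc : θ / 2 ≤ Real.arcsin (D / (2 * d)) := by
    have h1 : θ / 2 = Real.arcsin (Real.sin (θ / 2)) := by
      rw [Real.arcsin_sin (by linarith [Real.pi_pos]) (by linarith)]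
    rw [h1]
    exact Real.monotone_arcsin hratio
  linarith

theorem angularDiam_insert_le_max
    {E : Type*} [NormedAddCommGroup E] [InnerProductSpace ℝ E]
    (Z : Finset E) (hZ : Z.Nonempty) (a : E)
    (hd : 0 < infDist a (convexHull ℝ (Z : Set E)))
    (hD : diam (Z : Set E) ≤ 2 * infDist a (convexHull ℝ (Z : Set E)))
    (v : E) (hv : v ∈ convexHull ℝ (Z : Set E)) (hva : v ≠ a) :
    angularDiam a ((Z : Set E) ∪ {v}) ≤
      max (angularDiam a (Z : Set E))
        (2 * Real.arcsin
          (diam (Z : Set E) / (2 * infDist a (convexHull ℝ (Z : Set E))))) := by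
  set K : Set E := convexHull ℝ (Z : Set E) with hK
  set d : ℝ := infDist a K with hdd
  set D : ℝ := diam (Z : Set E) with hDD
  have hD0 : 0 ≤ D := diam_nonneg
  have harc0 : 0 ≤ 2 * Real.arcsin (D / (2 * d)) := by
    have : 0 ≤ Real.arcsin (D / (2 * d)) :=
      Real.arcsin_nonneg.2 (by positivity)
    linarith
  have hbd : Bornology.IsBounded K := by
    exact isBounded_convexHull.2 Z.finite_toSet.isBounded
  have hdiamK : diam K = D := convexHull_diam (Z : Set E)
  -- every point of K is at distance ≥ d from a
  have hdist : ∀ u ∈ K, d ≤ ‖u - a‖ := by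
    intro u hu
    have := infDist_le_dist_of_mem (x := a) hu
    rwa [dist_eq_norm, norm_sub_rev] at this
  have hsub : (Z : Set E) ⊆ K := subset_convexHull ℝ _
  have hmemK : ∀ u ∈ (Z : Set E) ∪ {v}, u ∈ K := by
    intro u hu
    rcases hu with hu | hu
    · exact hsub hu
    · simp only [Set.mem_singleton_iff] at hu; subst hu; exact hv
  apply le_trans _ (le_max_right _ _)
  apply Real.sSup_le _ harc0
  rintro θ ⟨u, hu, w, hw, rfl⟩
  have huK := hmemK u hu
  have hwK := hmemK w hw
  have huw : ‖u - w‖ ≤ D := by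
    rw [← dist_eq_norm, ← hdiamK]
    exact dist_le_diam_of_mem hbd huK hwK
  exact angle_le_two_arcsin hd (hdist u huK) (hdist w hwK) huw
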